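/- Let (Ω, 𝓕) be a measurable space, let P_0 and P_1 be probability measures on (Ω, 𝓕) with P_1 absolutely continuous with respect to P_0, and let Z = dP_1/dP_0 be the Radon–Nikodym derivative. Then for every measurable function π̂ : Ω → ℝ, all real numbers v_0, v_1, and every λ ≥ 1: (1/2) ∫ (π̂ − v_1)² dP_1 + (1/2) ∫ (π̂ − v_0)² dP_0 ≥ ((v_1 − v_0)² / (8λ)) · P_0({Z ≥ 1/λ}). -/

import Mathlib

open MeasureTheory
open scoped ENNReal

/-- Two-hypotheses reduction: if `P₁ ≪ P₀` with Radon–Nikodym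
derivative `Z = dP₁/dP₀`, then for any estimator `π̂`, values `v₀, v₁` and `λ ≥ 1`,
`(1/2)∫(π̂ − v₁)² dP₁ + (1/2)∫(π̂ − v₀)² dP₀ ≥ ((v₁ − v₀)²/(8λ)) P₀(Z ≥ 1/λ)`. -/
theorem stmt10 {Ω : Type*} [MeasurableSpace Ω] (P0 P1 : Measure Ω)
    [IsProbabilityMeasure P0] [IsProbabilityMeasure P1]
    (hac : P1 ≪ P0)
    (piHat : Ω → ℝ) (hmeas : Measurable piHat)
    (v0 v1 lam : ℝ) (hlam : 1 ≤ lam) :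
    ENNReal.ofReal ((v1 - v0) ^ 2 / (8 * lam)) *
        P0 {ω | ENNReal.ofReal (1 / lam) ≤ P1.rnDeriv P0 ω}
      ≤ (1 / 2) * ∫⁻ ω, ENNReal.ofReal ((piHat ω - v1) ^ 2) ∂P1 +
        (1 / 2) * ∫⁻ ω, ENNReal.ofReal ((piHat ω - v0) ^ 2) ∂P0 := by
  have hlam0 : (0:ℝ) < lam := lt_of_lt_of_le one_pos hlam
  set Z := P1.rnDeriv P0 with hZ
  set c : ℝ≥0∞ := ENNReal.ofReal (1 / lam) with hc
  set A : Set Ω := {ω | c ≤ Z ω} with hA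
  have hAmeas : MeasurableSet A :=
    measurableSet_le measurable_const (Measure.measurable_rnDeriv P1 P0)
  set f1 : Ω → ℝ≥0∞ := fun ω => ENNReal.ofReal ((piHat ω - v1) ^ 2) with hf1
  set f0 : Ω → ℝ≥0∞ := fun ω => ENNReal.ofReal ((piHat ω - v0) ^ 2) with hf0
  have hf1m : Measurable f1 := ((hmeas.sub measurable_const).pow_const 2).ennreal_ofReal
  have hf0m : Measurable f0 := ((hmeas.sub measurable_const).pow_const 2).ennreal_ofReal
  have hc1 : c ≤ 1 := by
    rw [hc]
    calc ENNReal.ofReal (1 / lam) ≤ ENNReal.ofReal 1 :=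
          ENNReal.ofReal_le_ofReal (by rw [div_le_one hlam0]; exact hlam)
      _ = 1 := ENNReal.ofReal_one
  -- Step 1: c * ∫_A f1 dP0 ≤ ∫ f1 dP1
  have h1 : c * ∫⁻ ω in A, f1 ω ∂P0 ≤ ∫⁻ ω, f1 ω ∂P1 := by
    rw [← lintegral_rnDeriv_mul hac hf1m.aemeasurable]
    calc c * ∫⁻ ω in A, f1 ω ∂P0 = ∫⁻ ω in A, c * f1 ω ∂P0 := by
          rw [lintegral_const_mul _ hf1m]
      _ ≤ ∫⁻ ω in A, Z ω * f1 ω ∂P0 := by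
          refine setLIntegral_mono ((Measure.measurable_rnDeriv P1 P0).mul hf1m) ?_
          intro ω hω
          exact mul_le_mul_left hω _
      _ ≤ ∫⁻ ω, Z ω * f1 ω ∂P0 := setLIntegral_le_lintegral _ _
  -- Step 2: restricted integral of f0
  have h0 : c * ∫⁻ ω in A, f0 ω ∂P0 ≤ ∫⁻ ω, f0 ω ∂P0 := by
    calc c * ∫⁻ ω in A, f0 ω ∂P0 ≤ 1 * ∫⁻ ω, f0 ω ∂P0 :=
          mul_le_mul' hc1 (setLIntegral_le_lintegral _ _)
      _ = ∫⁻ ω, f0 ω ∂P0 := one_mul _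
  -- Step 3: pointwise constant lower bound
  have hpt : ∀ ω, ENNReal.ofReal ((v1 - v0) ^ 2 / 2) ≤ f1 ω + f0 ω := by
    intro ω
    rw [hf1, hf0]
    rw [← ENNReal.ofReal_add (by positivity) (by positivity)]
    refine ENNReal.ofReal_le_ofReal ?_
    nlinarith [sq_nonneg (2 * piHat ω - v1 - v0)]
  have h3 : ENNReal.ofReal ((v1 - v0) ^ 2 / 2) * P0 A
      ≤ ∫⁻ ω in A, (f1 ω + f0 ω) ∂P0 := by
    rw [← setLIntegral_const A _]
    exact lintegral_mono fun ω => hpt ω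
  -- combine
  have key : ENNReal.ofReal ((v1 - v0) ^ 2 / (8 * lam)) * P0 A
      ≤ (ENNReal.ofReal (1/2) * c) * (ENNReal.ofReal ((v1 - v0) ^ 2 / 2) * P0 A) := by
    rw [← mul_assoc, hc, ← ENNReal.ofReal_mul (by norm_num),
      ← ENNReal.ofReal_mul (by positivity)]
    refine mul_le_mul_left (ENNReal.ofReal_le_ofReal ?_) _
    have h4 : (1/2 : ℝ) * (1 / lam) * ((v1 - v0) ^ 2 / 2) = (v1 - v0) ^ 2 / (4 * lam) := by
      field_simp
      ring_nf
    rw [h4]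
    exact div_le_div_of_nonneg_left (by positivity) (by positivity) (by linarith)
  have half : (ENNReal.ofReal (1/2) : ℝ≥0∞) = 1 / 2 := by
    rw [ENNReal.ofReal_div_of_pos (by norm_num)]
    norm_num
  calc ENNReal.ofReal ((v1 - v0) ^ 2 / (8 * lam)) * P0 A
      ≤ (ENNReal.ofReal (1/2) * c) * (ENNReal.ofReal ((v1 - v0) ^ 2 / 2) * P0 A) := key
    _ ≤ (ENNReal.ofReal (1/2) * c) * ∫⁻ ω in A, (f1 ω + f0 ω) ∂P0 := by
        exact mul_le_mul_right h3 _
    _ = ENNReal.ofReal (1/2) * (c * ∫⁻ ω in A, f1 ω ∂P0) +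
        ENNReal.ofReal (1/2) * (c * ∫⁻ ω in A, f0 ω ∂P0) := by
        rw [lintegral_add_left hf1m]
        ring
    _ ≤ (1/2) * ∫⁻ ω, f1 ω ∂P1 + (1/2) * ∫⁻ ω, f0 ω ∂P0 := by
        rw [half]
        exact add_le_add (mul_le_mul_right h1 _) (mul_le_mul_right h0 _)
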